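/- Let d ≥ 2 be even. Then the affine hull of P_{∂σ_{d+1}} = conv(columns of L), where L_{ii} = d+1 and L_{ij} = (-1)^{i+j-1} for i ≠ j, equals { x ∈ ℝ^{d+2} : Σ_{k odd} x_k = Σ_{k even} x_k = (d+2)/2 }. -/

import Mathlib

open Matrix

/-- The `d`-th Laplacian matrix of the boundary of the `(d+1)`-simplex:
`L_{ii} = d+1` and `L_{ij} = (-1)^{i+j-1}` for `i ≠ j` (1-indexed; here 0-indexed,
so the sign is `(-1)^{i+j+1}`). -/
def lap (d : ℕ) : Matrix (Fin (d+2)) (Fin (d+2)) ℝ :=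
  Matrix.of fun i j => if i = j then (d+1 : ℝ) else (-1 : ℝ)^((i:ℕ)+(j:ℕ)+1)

open Finset

lemma card_even_range (m : ℕ) : ((range (2*m)).filter (fun k => Even k)).card = m := by
  induction m with
  | zero => simp
  | succ n ih =>
    have : 2*(n+1) = (2*n + 1) + 1 := by ring
    rw [this, Finset.range_add_one, Finset.range_add_one, Finset.filter_insert, Finset.filter_insert]
    have h1 : Even (2*n) := even_two_mul n
    have h2 : ¬ Even (2*n+1) := by simp [Nat.even_add_one, h1]
    simp [h1, h2, Finset.card_insert_of_notMem, ih]

lemma card_odd_range (m : ℕ) : ((range (2*m)).filter (fun k => ¬ Even k)).card = m := by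
  have := Finset.card_filter_add_card_filter_not (s := range (2*m)) (p := fun k => Even k)
  rw [card_even_range, Finset.card_range] at this
  omega

lemma neg_pow_even (a k : ℕ) (h : Even k) : ((-1:ℝ))^(a+k+1) = (-1)^(a+1) := by
  rw [show a+k+1 = k+(a+1) by omega, pow_add, h.neg_one_pow, one_mul]

lemma neg_pow_odd (a k : ℕ) (h : ¬ Even k) : ((-1:ℝ))^(a+k+1) = (-1)^a := by
  rw [show a+k+1 = k+(a+1) by omega, pow_add, (Nat.not_even_iff_odd.mp h).neg_one_pow,
    pow_succ]
  ring

lemma sign_sum_even (m j : ℕ) :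
    ∑ k ∈ (range (2*m)).filter (fun k => Even k), ((-1:ℝ))^(k+j+1) = m * (-1)^(j+1) := by
  rw [Finset.sum_congr rfl (fun k hk => by
    rw [show k+j+1 = j+k+1 by omega, neg_pow_even j k (mem_filter.mp hk).2]),
    Finset.sum_const, card_even_range, nsmul_eq_mul]

lemma sign_sum_odd (m j : ℕ) :
    ∑ k ∈ (range (2*m)).filter (fun k => ¬ Even k), ((-1:ℝ))^(k+j+1) = m * (-1)^j := by
  rw [Finset.sum_congr rfl (fun k hk => by
    rw [show k+j+1 = j+k+1 by omega, neg_pow_odd j k (mem_filter.mp hk).2]),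
    Finset.sum_const, card_odd_range, nsmul_eq_mul]

lemma split_diag (j k : ℕ) (c : ℝ) :
    (if k = j then c else (-1:ℝ)^(k+j+1))
      = (-1:ℝ)^(k+j+1) + (if k = j then c+1 else 0) := by
  rcases eq_or_ne k j with rfl | h
  · rw [if_pos rfl, if_pos rfl, show k+k+1 = 2*k+1 by omega, pow_succ,
      (even_two_mul k).neg_one_pow]
    ring
  · simp [h]

lemma colsum_even (n m j : ℕ) (hn : n = 2*m) (hj : j < n) (c : ℝ) (hc : c + 1 = 2*m) :
    ∑ k ∈ (range n).filter (fun k => Even k),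
      (if k = j then c else (-1:ℝ)^(k+j+1)) = m := by
  subst hn
  simp_rw [split_diag, Finset.sum_add_distrib, sign_sum_even, Finset.sum_ite_eq']
  by_cases hje : Even j
  · have : (-1:ℝ)^(j+1) = -1 := (Even.add_one hje).neg_one_pow
    simp [mem_filter, hj, hje, this, hc]
    ring
  · have : (-1:ℝ)^(j+1) = 1 := (Odd.add_one (Nat.not_even_iff_odd.mp hje)).neg_one_pow
    simp [mem_filter, hje, this]

lemma colsum_odd (n m j : ℕ) (hn : n = 2*m) (hj : j < n) (c : ℝ) (hc : c + 1 = 2*m) :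
    ∑ k ∈ (range n).filter (fun k => ¬ Even k),
      (if k = j then c else (-1:ℝ)^(k+j+1)) = m := by
  subst hn
  simp_rw [split_diag, Finset.sum_add_distrib, sign_sum_odd, Finset.sum_ite_eq']
  by_cases hje : Even j
  · have : (-1:ℝ)^j = 1 := hje.neg_one_pow
    simp [mem_filter, hje, this]
  · have h2 : (-1:ℝ)^j = -1 := (Nat.not_even_iff_odd.mp hje).neg_one_pow
    simp [mem_filter, hj, hje, Nat.not_even_iff_odd.mp hje, h2]
    linarith [hc]

lemma fin_filter_sum {n : ℕ} (P : ℕ → Prop) [DecidablePred P] (f : ℕ → ℝ) (x : Fin n → ℝ)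
    (hx : ∀ k, x k = f (k:ℕ)) :
    ∑ k ∈ Finset.univ.filter (fun k : Fin n => P (k:ℕ)), x k
      = ∑ k ∈ (range n).filter P, f k := by
  rw [Finset.sum_filter, Finset.sum_filter,
    ← Fin.sum_univ_eq_sum_range (fun k => if P k then f k else 0) n]
  exact Finset.sum_congr rfl (fun k _ => by rw [hx])

lemma col_mem (d m : ℕ) (hm : d + 2 = 2*m) (j : Fin (d+2)) :
    ((∑ k ∈ Finset.univ.filter fun k : Fin (d+2) => Odd ((k:ℕ)+1), (lap d)ᵀ j k)
        = (d+2 : ℝ)/2 ∧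
      (∑ k ∈ Finset.univ.filter fun k : Fin (d+2) => Even ((k:ℕ)+1), (lap d)ᵀ j k)
        = (d+2 : ℝ)/2) := by
  have hx : ∀ k : Fin (d+2), (lap d)ᵀ j k
      = (fun t : ℕ => if t = (j:ℕ) then (d+1:ℝ) else (-1:ℝ)^(t+(j:ℕ)+1)) (k:ℕ) := by
    intro k
    rcases eq_or_ne k j with rfl | h
    · simp [lap]
    · simp [lap, transpose_apply, h, (Fin.val_ne_iff).mpr h]
  have hc : (d+1:ℝ) + 1 = 2*(m:ℝ) := by
    have h := congrArg (Nat.cast (R:=ℝ)) hm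
    push_cast at h
    linarith
  have hval : ((d:ℝ)+2)/2 = (m:ℝ) := by
    have : ((d:ℝ)+2) = 2*m := by exact_mod_cast congrArg (Nat.cast : ℕ → ℝ) hm
    rw [this]; ring
  constructor
  · rw [fin_filter_sum (fun t => Odd (t+1)) (fun t : ℕ => if t = (j:ℕ) then (d+1:ℝ) else (-1:ℝ)^(t+(j:ℕ)+1)) _ hx,
      show (range (d+2)).filter (fun t => Odd (t+1)) = (range (d+2)).filter (fun t => Even t)
        by ext t; simp [Nat.odd_add_one]]
    exact (colsum_even (d+2) m (j:ℕ) hm j.isLt _ hc).trans hval.symm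
  · rw [fin_filter_sum (fun t => Even (t+1)) (fun t : ℕ => if t = (j:ℕ) then (d+1:ℝ) else (-1:ℝ)^(t+(j:ℕ)+1)) _ hx,
      show (range (d+2)).filter (fun t => Even (t+1)) = (range (d+2)).filter (fun t => ¬ Even t)
        by ext t; simp [Nat.even_add_one]]
    exact (colsum_odd (d+2) m (j:ℕ) hm j.isLt _ hc).trans hval.symm

/-- for even `d ≥ 2`, the affine hull of
`P_{∂σ_{d+1}} = conv(columns of L)` equals
`{x ∈ ℝ^{d+2} : Σ_{k odd} x_k = Σ_{k even} x_k = (d+2)/2}`, indices `k` 1-indexed,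
i.e. `k = (k:ℕ)+1` below. -/
theorem stmt10 (d : ℕ) (hd : 2 ≤ d) (he : Even d) :
    (affineSpan ℝ (Set.range (lap d)ᵀ) : Set (Fin (d+2) → ℝ)) =
      {x | (∑ k ∈ Finset.univ.filter fun k : Fin (d+2) => Odd ((k:ℕ)+1), x k)
             = (d+2 : ℝ)/2 ∧
           (∑ k ∈ Finset.univ.filter fun k : Fin (d+2) => Even ((k:ℕ)+1), x k)
             = (d+2 : ℝ)/2} := by
  obtain ⟨r, hr⟩ := he
  have hm : d + 2 = 2*(r+1) := by omega
  set m : ℕ := r + 1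
  have hd2 : (d:ℝ) + 2 ≠ 0 := by positivity
  ext x
  simp only [Set.mem_setOf_eq, SetLike.mem_coe]
  constructor
  · intro hx
    refine affineSpan_induction (p := fun y : Fin (d+2) → ℝ =>
      (∑ k ∈ Finset.univ.filter fun k : Fin (d+2) => Odd ((k:ℕ)+1), y k) = (d+2 : ℝ)/2 ∧
      (∑ k ∈ Finset.univ.filter fun k : Fin (d+2) => Even ((k:ℕ)+1), y k) = (d+2 : ℝ)/2) hx (fun y hy => ?_) (fun c u v w hu hv hw => ?_)
    · obtain ⟨j, rfl⟩ := hy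
      exact col_mem d m hm j
    · have expand : ∀ s : Finset (Fin (d+2)), ∑ k ∈ s, (c • (u -ᵥ v) +ᵥ w) k
          = c * ((∑ k ∈ s, u k) - ∑ k ∈ s, v k) + ∑ k ∈ s, w k := by
        intro s
        simp only [vadd_eq_add, vsub_eq_sub, Pi.add_apply, Pi.smul_apply, Pi.sub_apply,
          smul_eq_mul, mul_sub]
        rw [Finset.sum_add_distrib, Finset.sum_sub_distrib, ← Finset.mul_sum,
          ← Finset.mul_sum]
      exact ⟨by rw [expand _, hu.1, hv.1, hw.1]; ring,
        by rw [expand _, hu.2, hv.2, hw.2]; ring⟩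
  · rintro ⟨h1, h2⟩
    have hflip : Finset.univ.filter (fun k : Fin (d+2) => ¬ Odd ((k:ℕ)+1))
        = Finset.univ.filter (fun k : Fin (d+2) => Even ((k:ℕ)+1)) := by
      ext k; simp [Nat.not_odd_iff_even]
    have hsum : ∑ k, x k = (d:ℝ)+2 := by
      rw [← Finset.sum_filter_add_sum_filter_not Finset.univ
        (fun k : Fin (d+2) => Odd ((k:ℕ)+1)) x, hflip, h1, h2]
      ring
    have hsign : ∀ i : Fin (d+2), ∑ j, x j * (-1:ℝ)^((i:ℕ)+(j:ℕ)+1) = 0 := by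
      intro i
      rw [← Finset.sum_filter_add_sum_filter_not Finset.univ
        (fun j : Fin (d+2) => Odd ((j:ℕ)+1)), hflip]
      have e1 : ∀ j ∈ Finset.univ.filter (fun j : Fin (d+2) => Odd ((j:ℕ)+1)),
          x j * (-1:ℝ)^((i:ℕ)+(j:ℕ)+1) = x j * (-1:ℝ)^((i:ℕ)+1) := by
        intro j hj
        rw [neg_pow_even (i:ℕ) (j:ℕ) (Nat.not_odd_iff_even.mp (Nat.odd_add_one.mp (Finset.mem_filter.mp hj).2))]
      have e2 : ∀ j ∈ Finset.univ.filter (fun j : Fin (d+2) => Even ((j:ℕ)+1)),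
          x j * (-1:ℝ)^((i:ℕ)+(j:ℕ)+1) = x j * (-1:ℝ)^(i:ℕ) := by
        intro j hj
        rw [neg_pow_odd (i:ℕ) (j:ℕ) (by
          have := (Finset.mem_filter.mp hj).2
          simpa [Nat.even_add_one] using this)]
      rw [Finset.sum_congr rfl e1, Finset.sum_congr rfl e2, ← Finset.sum_mul,
        ← Finset.sum_mul, h1, h2, pow_succ]
      ring
    set w : Fin (d+2) → ℝ := fun j => x j / ((d:ℝ)+2) with hwdef
    have hw : ∑ j, w j = 1 := by
      rw [hwdef]
      simp_rw [← Finset.sum_div, hsum]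
      field_simp
    have heq : Finset.univ.affineCombination ℝ (lap d)ᵀ w = x := by
      refine (Finset.univ.affineCombination_eq_linear_combination _ _ hw).trans ?_
      funext i
      rw [Finset.sum_apply]
      simp only [Pi.smul_apply, smul_eq_mul, transpose_apply]
      have key : ∀ j : Fin (d+2), w j * lap d i j
          = (x j * (-1:ℝ)^((i:ℕ)+(j:ℕ)+1)) / ((d:ℝ)+2) + (if i = j then x j else 0) := by
        intro j
        rcases eq_or_ne i j with rfl | hij
        · rw [hwdef]
          simp only [lap, of_apply, if_pos rfl, ↓reduceIte]
          rw [show (i:ℕ)+(i:ℕ)+1 = 2*(i:ℕ)+1 by omega, pow_succ,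
            (even_two_mul (i:ℕ)).neg_one_pow]
          field_simp
          ring
        · simp only [lap, of_apply, if_neg hij, hwdef]
          ring
      rw [Finset.sum_congr rfl (fun j _ => key j), Finset.sum_add_distrib,
        ← Finset.sum_div, hsign i, Finset.sum_ite_eq]
      simp
    exact heq ▸ affineCombination_mem_affineSpan hw (lap d)ᵀ
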